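/- Let A be a symmetric n×n matrix with entries in {0,1} with n ≥ 2, and eigenvalues λ_1 ≥ ⋯ ≥ λ_n. Then λ_2(A) − λ_n(A) ≤ n/√2. -/

import Mathlib

/-- For a symmetric `n × n` `(0,1)`-matrix `A` with `n ≥ 2` and eigenvalues `μ`
in nonincreasing order, `λ_2(A) - λ_n(A) ≤ n / √2`. -/
theorem spread_10_upper_bound (n : ℕ) (hn : 2 ≤ n)
    (A : Matrix (Fin n) (Fin n) ℝ) (hA : A.IsHermitian)
    (hA01 : ∀ a b, A a b = 0 ∨ A a b = 1)
    (μ : Fin n → ℝ) (hmono : Antitone μ)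
    (hperm : Finset.univ.val.map μ = Finset.univ.val.map hA.eigenvalues) :
    μ ⟨1, by omega⟩ - μ ⟨n - 1, by omega⟩ ≤ (n : ℝ) / Real.sqrt 2 := by
  classical
  open Matrix Finset in
  set e := hA.eigenvalues with he
  set U : Matrix (Fin n) (Fin n) ℝ := (hA.eigenvectorUnitary : Matrix (Fin n) (Fin n) ℝ)
    with hUdef
  have hUU : U * star U = 1 := (Matrix.mem_unitaryGroup_iff).mp hA.eigenvectorUnitary.2
  have hUU' : star U * U = 1 := (Matrix.mem_unitaryGroup_iff').mp hA.eigenvectorUnitary.2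
  have hspec : A = U * diagonal e * star U := by
    have := hA.spectral_theorem
    simpa using this
  set m : ℝ := ∑ i, ∑ j, A i j with hm
  -- m is the Frobenius norm squared, since entries are 0/1
  have hsq : ∀ i j, A i j * A i j = A i j := by
    intro i j; rcases hA01 i j with h | h <;> rw [h] <;> ring
  have hsymm : ∀ i j, A j i = A i j := by
    intro i j
    have := congrFun (congrFun (hA : Aᴴ = A) i) j
    simpa [Matrix.conjTranspose_apply] using this
  -- trace of A*A equals m
  have htr1 : Matrix.trace (A * A) = m := by
    simp only [Matrix.trace, Matrix.diag, Matrix.mul_apply, hm]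
    rw [Finset.sum_comm]
    congr 1; funext i
    congr 1; funext j
    rw [hsymm i j, hsq]
  -- trace of A*A equals sum of squares of eigenvalues
  have htr2 : Matrix.trace (A * A) = ∑ i, e i ^ 2 := by
    conv_lhs => rw [hspec]
    have hre : U * diagonal e * star U * (U * diagonal e * star U)
        = U * (diagonal e * ((star U * U) * (diagonal e * star U))) := by
      simp only [Matrix.mul_assoc]
    rw [hre, hUU', Matrix.one_mul, Matrix.trace_mul_comm]
    have hre2 : diagonal e * (diagonal e * star U) * U
        = diagonal e * diagonal e * (star U * U) := by
      simp only [Matrix.mul_assoc]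
    rw [hre2, hUU', Matrix.mul_one, Matrix.diagonal_mul_diagonal]
    simp [Matrix.trace, sq]
  have hsum_e_sq : ∑ i, e i ^ 2 = m := by rw [← htr2, htr1]
  -- Rayleigh with the all-ones vector
  set x : Fin n → ℝ := fun _ => 1 with hx
  set y : Fin n → ℝ := star U *ᵥ x with hy
  have hxAx : x ⬝ᵥ (A *ᵥ x) = ∑ i, e i * y i ^ 2 := by
    conv_lhs => rw [hspec]
    rw [← Matrix.mulVec_mulVec, ← Matrix.mulVec_mulVec, Matrix.dotProduct_mulVec]
    have hxU : x ᵥ* U = y := by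
      rw [hy, ← Matrix.mulVec_transpose]
      congr 1
    rw [hxU]
    simp only [dotProduct, Matrix.mulVec_diagonal]
    exact Finset.sum_congr rfl fun i _ => by ring
  have hxAx' : x ⬝ᵥ (A *ᵥ x) = m := by
    simp [dotProduct, Matrix.mulVec, hm, hx]
  have hyy : ∑ i, y i ^ 2 = (n : ℝ) := by
    have h1 : ∑ i, y i ^ 2 = y ⬝ᵥ y := by
      simp [dotProduct, sq]
    have h2 : y ⬝ᵥ y = x ⬝ᵥ x := by
      rw [hy, Matrix.dotProduct_mulVec, ← Matrix.mulVec_transpose]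
      have : (star U)ᵀ = U := by
        simp [Matrix.star_eq_conjTranspose]
      rw [this, Matrix.mulVec_mulVec, hUU, Matrix.one_mulVec]
    rw [h1, h2]
    simp [dotProduct, hx]
  -- every eigenvalue is at most μ 0
  have hi0 : (0 : ℕ) < n := by omega
  have hnpos : (0 : ℝ) < n := Nat.cast_pos.mpr (by omega)
  have hμ0_ge : ∀ i, e i ≤ μ ⟨0, hi0⟩ := by
    intro i
    have hmem : e i ∈ Finset.univ.val.map μ := by
      rw [hperm]
      exact Multiset.mem_map_of_mem _ (Finset.mem_univ_val i)
    obtain ⟨j, _, hj⟩ := Multiset.mem_map.mp hmem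
    rw [← hj]
    exact hmono (Fin.mk_le_of_le_val (Nat.zero_le _))
  -- m ≤ μ 0 * n
  have hmn : m ≤ μ ⟨0, hi0⟩ * n := by
    have : m = ∑ i, e i * y i ^ 2 := by rw [← hxAx, hxAx']
    rw [this, ← hyy, Finset.mul_sum]
    exact Finset.sum_le_sum fun i _ =>
      mul_le_mul_of_nonneg_right (hμ0_ge i) (sq_nonneg _)
  have hm_nonneg : 0 ≤ m := by
    rw [hm]
    apply Finset.sum_nonneg; intro i _
    apply Finset.sum_nonneg; intro j _
    rcases hA01 i j with h | h <;> rw [h] <;> norm_num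
  have hμ0_nonneg : 0 ≤ μ ⟨0, hi0⟩ := by
    nlinarith [hmn, hm_nonneg, hnpos]
  -- sum of squares of μ equals m
  have hsum_μ_sq : ∑ i, μ i ^ 2 = m := by
    rw [← hsum_e_sq]
    have := congrArg (fun s : Multiset ℝ => (s.map (fun t => t ^ 2)).sum) hperm
    simpa [Multiset.map_map, Function.comp_def, Finset.sum] using this
  -- case n = 2
  rcases eq_or_lt_of_le hn with hn2 | hn3
  · have : (⟨1, by omega⟩ : Fin n) = ⟨n - 1, by omega⟩ := by
      apply Fin.ext; simp; omega
    rw [this, sub_self]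
    positivity
  · -- n ≥ 3 : the three indices are distinct
    have h3 : 3 ≤ n := hn3
    set i0 : Fin n := ⟨0, hi0⟩
    set i1 : Fin n := ⟨1, by omega⟩
    set ik : Fin n := ⟨n - 1, by omega⟩
    have h01 : i0 ≠ i1 := by simp [i0, i1, Fin.ext_iff]
    have h0k : i0 ≠ ik := by simp [i0, ik, Fin.ext_iff]; omega
    have h1k : i1 ≠ ik := by simp [i1, ik, Fin.ext_iff]; omega
    have hsub : μ i0 ^ 2 + μ i1 ^ 2 + μ ik ^ 2 ≤ ∑ i, μ i ^ 2 := by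
      have hset : ({i0, i1, ik} : Finset (Fin n)) ⊆ Finset.univ := Finset.subset_univ _
      calc μ i0 ^ 2 + μ i1 ^ 2 + μ ik ^ 2
          = ∑ i ∈ ({i0, i1, ik} : Finset (Fin n)), μ i ^ 2 := by
            rw [Finset.sum_insert (by simp [h01, h0k]),
              Finset.sum_insert (by simp [h1k]), Finset.sum_singleton]
            ring
        _ ≤ ∑ i, μ i ^ 2 :=
            Finset.sum_le_sum_of_subset_of_nonneg hset fun i _ _ => sq_nonneg _
    rw [hsum_μ_sq] at hsub
    -- μ 0 ≥ m / n hence μ0² ≥ m²/n²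
    have key : m * m ≤ (μ i0 * n) * (μ i0 * n) := mul_self_le_mul_self hm_nonneg hmn
    have hsub' : (n : ℝ) ^ 2 * (μ i1 ^ 2 + μ ik ^ 2) ≤ (n : ℝ) ^ 2 * (m - μ i0 ^ 2) :=
      mul_le_mul_of_nonneg_left (by linarith [hsub]) (by positivity)
    have hb : μ i1 ^ 2 + μ ik ^ 2 ≤ (n : ℝ) ^ 2 / 4 := by
      nlinarith [key, hsub', sq_nonneg ((n : ℝ) ^ 2 - 2 * m), mul_pos hnpos hnpos,
        sq_nonneg (μ i1 ^ 2 + μ ik ^ 2 - (n : ℝ) ^ 2 / 4)]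
    -- finish
    have hs2 : (0 : ℝ) < Real.sqrt 2 := Real.sqrt_pos.mpr (by norm_num)
    rw [le_div_iff₀ hs2]
    have hsq2 : Real.sqrt 2 ^ 2 = 2 := Real.sq_sqrt (by norm_num)
    nlinarith [sq_nonneg (μ i1 - μ ik), sq_nonneg (μ i1 + μ ik), hb, hsq2,
      sq_nonneg ((μ i1 - μ ik) * Real.sqrt 2 - n), hs2.le, hnpos,
      mul_pos hs2 hnpos]
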